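/- Fix θ_0 ∈ Θ, an integer B > 1, and a prior density π_0 on Θ (with respect to ν_Θ) whose marginal f̄_{π_0} is positive wherever some f_θ is positive. Let X ~ f_{θ_0}. Conditionally on X, let Z = (θ̂_1, …, θ̂_B) consist of i.i.d. draws from the posterior π(· | X), and let Z′ = (θ̂′_1, …, θ̂′_B) be the corrupted version in which an index K is drawn uniformly from {1, …, B}, θ̂′_K is drawn from the posterior π_0(· | X) under prior π_0, and θ̂′_k = θ̂_k for all k ≠ K. Then the total variation distance between the joint laws of (X, Z) and (X, Z′) is at most Δ(π_0) / (2√B), where Δ(π_0) = E_{X ~ f_{θ_0}}[ χ²(π_0(· | X) ‖ π(· | X))^{1/2} ]. -/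

import Mathlib

open MeasureTheory ProbabilityTheory ENNReal

open scoped Classical

noncomputable section

/-- The total variation distance `d_TV(P, Q) = sup_A |P(A) - Q(A)|` between two measures. -/
def tvDist {Ω : Type*} [MeasurableSpace Ω] (P Q : Measure Ω) : ℝ≥0∞ :=
  ⨆ (s : Set Ω) (_ : MeasurableSet s), (P s - Q s) ⊔ (Q s - P s)

/-- The chi-squared divergence `χ²(Q ‖ P) = ∫ (dQ/dP - 1)² dP` if `Q ≪ P`, and `∞` otherwise. -/
def chiSq {Ω : Type*} [MeasurableSpace Ω] (Q P : Measure Ω) : ℝ≥0∞ :=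
  if Q ≪ P then ∫⁻ ω, ((Q.rnDeriv P ω - 1) ⊔ (1 - Q.rnDeriv P ω)) ^ 2 ∂P else ⊤

/-- A measure on `Fin n → 𝒳` is exchangeable if it is invariant under every permutation of the
coordinates. -/
def Exchangeable {𝒳 : Type*} [MeasurableSpace 𝒳] {n : ℕ} (Q : Measure (Fin n → 𝒳)) : Prop :=
  ∀ σ : Equiv.Perm (Fin n), Measure.map (fun v => v ∘ σ) Q = Q

/-- The distance to exchangeability: the infimum, over exchangeable probability measures `Q`,
of the total variation distance to `Q`. -/
def dExch {𝒳 : Type*} [MeasurableSpace 𝒳] {n : ℕ} (P : Measure (Fin n → 𝒳)) : ℝ≥0∞ :=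
  ⨅ (Q : Measure (Fin n → 𝒳)) (_ : IsProbabilityMeasure Q) (_ : Exchangeable Q), tvDist P Q

/-- The p-value `(1 + #{m : T(v (m+1)) ≥ T(v 0)}) / (M + 1)`, where `v 0` is the data and
`v 1, …, v M` are the copies. -/
def pval {𝒳 : Type*} {M : ℕ} (T : 𝒳 → ℝ) (v : Fin (M + 1) → 𝒳) : ℝ :=
  (1 + ((Finset.univ.filter fun m : Fin M => T (v 0) ≤ T (v m.succ)).card : ℝ)) / (M + 1)

variable {Θ 𝒳 : Type*} [MeasurableSpace Θ] [MeasurableSpace 𝒳]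

/-- The marginal likelihood `f̄_π(x) = ∫ π(θ) f_θ(x) dν_Θ(θ)`. -/
def marg (νΘ : Measure Θ) (π : Θ → ℝ≥0∞) (f : Θ → 𝒳 → ℝ≥0∞) (x : 𝒳) : ℝ≥0∞ :=
  ∫⁻ θ, π θ * f θ x ∂νΘ

/-- The posterior density `π(θ | x) = π(θ) f_θ(x) / f̄_π(x)`. -/
def postDens (νΘ : Measure Θ) (π : Θ → ℝ≥0∞) (f : Θ → 𝒳 → ℝ≥0∞) (x : 𝒳) (θ : Θ) : ℝ≥0∞ :=
  π θ * f θ x / marg νΘ π f x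

/-- The posterior distribution of `θ` given `x`. -/
def postMeas (νΘ : Measure Θ) (π : Θ → ℝ≥0∞) (f : Θ → 𝒳 → ℝ≥0∞) (x : 𝒳) : Measure Θ :=
  νΘ.withDensity (postDens νΘ π f x)

/-- The unnormalized density of the copies: `(∏_b f_{θ_b}(x)) / f̄_π(x)^{B-1}`. -/
def gDensU (νΘ : Measure Θ) (π : Θ → ℝ≥0∞) (f : Θ → 𝒳 → ℝ≥0∞) {B : ℕ}
    (θs : Fin B → Θ) (x : 𝒳) : ℝ≥0∞ :=
  (∏ b, f (θs b) x) / (marg νΘ π f x) ^ (B - 1)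

/-- The normalizing constant of `gDensU`. -/
def gNorm (νΘ : Measure Θ) (ν𝒳 : Measure 𝒳) (π : Θ → ℝ≥0∞) (f : Θ → 𝒳 → ℝ≥0∞) {B : ℕ}
    (θs : Fin B → Θ) : ℝ≥0∞ :=
  ∫⁻ x, gDensU νΘ π f θs x ∂ν𝒳

/-- The probability distribution `g_π(· | θ_{1:B})` on `𝒳`. -/
def gMeas (νΘ : Measure Θ) (ν𝒳 : Measure 𝒳) (π : Θ → ℝ≥0∞) (f : Θ → 𝒳 → ℝ≥0∞) {B : ℕ}
    (θs : Fin B → Θ) : Measure 𝒳 :=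
  ν𝒳.withDensity fun x => gDensU νΘ π f θs x / gNorm νΘ ν𝒳 π f θs

/-- The prior concentration `ε(π₀) = d_TV(f_{θ₀}, f̄_{π₀})`. -/
def priorEps (νΘ : Measure Θ) (ν𝒳 : Measure 𝒳) (f : Θ → 𝒳 → ℝ≥0∞) (θ0 : Θ)
    (π0 : Θ → ℝ≥0∞) : ℝ≥0∞ :=
  tvDist (ν𝒳.withDensity (f θ0)) (ν𝒳.withDensity (marg νΘ π0 f))

/-- The posterior sensitivity `Δ(π₀) = E_{X ~ f_{θ₀}}[χ²(π₀(·|X) ‖ π(·|X))^{1/2}]`. -/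
def priorDelta (νΘ : Measure Θ) (ν𝒳 : Measure 𝒳) (π : Θ → ℝ≥0∞) (f : Θ → 𝒳 → ℝ≥0∞)
    (θ0 : Θ) (π0 : Θ → ℝ≥0∞) : ℝ≥0∞ :=
  ∫⁻ x, (chiSq (postMeas νΘ π0 f x) (postMeas νΘ π f x)) ^ (1 / 2 : ℝ)
    ∂(ν𝒳.withDensity (f θ0))

/-- The bound `inf_{π₀} { ε(π₀) + Δ(π₀) / (2√B) }`, the infimum over all prior densities `π₀`
on `Θ` whose marginal `f̄_{π₀}` is positive wherever some `f_θ` is positive. -/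
def acssBound (νΘ : Measure Θ) (ν𝒳 : Measure 𝒳) (π : Θ → ℝ≥0∞) (f : Θ → 𝒳 → ℝ≥0∞)
    (θ0 : Θ) (B : ℕ) : ℝ≥0∞ :=
  sInf { r : ℝ≥0∞ | ∃ π0 : Θ → ℝ≥0∞, Measurable π0 ∧
    IsProbabilityMeasure (νΘ.withDensity π0) ∧
    (∀ θ x, f θ x ≠ 0 → marg νΘ π0 f x ≠ 0) ∧
    r = priorEps νΘ ν𝒳 f θ0 π0
        + priorDelta νΘ ν𝒳 π f θ0 π0 / (2 * (B : ℝ≥0∞) ^ (1 / 2 : ℝ)) }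


section ACSSHelpers

open Finset
open scoped NNReal

lemma ennreal_mul_sub' (a b c : ℝ≥0∞) (ha : a ≠ ∞) : a * (b - c) = a * b - a * c :=
  ENNReal.mul_sub (fun _ _ => ha)

lemma ennreal_addswap (a b : ℝ≥0∞) : a + (b - a) = b + (a - b) := by
  rcases le_total a b with h | h
  · rw [add_tsub_cancel_of_le h, tsub_eq_zero_of_le h, add_zero]
  · rw [tsub_eq_zero_of_le h, add_zero, add_tsub_cancel_of_le h]

lemma ennreal_sub_le_of_add_eq {a b c d : ℝ≥0∞} (hd : d ≠ ∞) (h : a + b = c + d) :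
    c - a ≤ b - d := by
  by_cases ha : a = ∞
  · simp [ha]
  rcases le_or_gt d b with hdb | hbd
  · rw [tsub_le_iff_right]
    have : c + d = (b - d + a) + d := by
      rw [add_assoc, add_comm a d, ← add_assoc, tsub_add_cancel_of_le hdb, add_comm b a, h]
    have hc : c = b - d + a := by
      have := this
      rw [add_comm c d, add_comm (b - d + a) d] at this
      exact (ENNReal.add_right_inj hd).mp this
    exact hc.le
  · have hlt : c + d < a + d := by
      calc c + d = a + b := h.symm
      _ < a + d := ENNReal.add_lt_add_left ha hbd
    have : c < a := (ENNReal.add_lt_add_iff_right hd).mp hlt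
    simp [tsub_eq_zero_of_le this.le]

lemma nnreal_pt (a b : ℝ≥0) : (a - b) ^ 2 + (b - a) ^ 2 + 2 * (a * b) = a ^ 2 + b ^ 2 := by
  rcases le_total a b with h | h
  · obtain ⟨c, rfl⟩ : ∃ c, b = a + c := ⟨b - a, (add_tsub_cancel_of_le h).symm⟩
    rw [tsub_eq_zero_of_le h, add_tsub_cancel_left]
    ring
  · obtain ⟨c, rfl⟩ : ∃ c, a = b + c := ⟨a - b, (add_tsub_cancel_of_le h).symm⟩
    rw [tsub_eq_zero_of_le h, add_tsub_cancel_left]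
    ring

lemma ennreal_pt (a b : ℝ≥0∞) : (a - b) ^ 2 + (b - a) ^ 2 + 2 * (a * b) = a ^ 2 + b ^ 2 := by
  rcases eq_or_ne a ∞ with rfl | ha
  · rcases eq_or_ne b ∞ with rfl | hb
    · simp [ENNReal.top_pow]
    · simp [ENNReal.top_sub hb, pow_two, ENNReal.top_mul_top, top_add]
  rcases eq_or_ne b ∞ with rfl | hb
  · simp [ENNReal.top_sub ha, pow_two, top_add, add_comm]
  lift a to ℝ≥0 using ha
  lift b to ℝ≥0 using hb
  rw [← ENNReal.coe_sub, ← ENNReal.coe_sub]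
  push_cast [← ENNReal.coe_pow, ← ENNReal.coe_mul]
  exact_mod_cast congrArg (fun x : ℝ≥0 => (x : ℝ≥0∞)) (nnreal_pt a b)

lemma ennreal_sub_mul_sub_symm (a b : ℝ≥0∞) : (a - b) * (b - a) = 0 := by
  rcases le_total a b with h | h
  · rw [tsub_eq_zero_of_le h, zero_mul]
  · rw [tsub_eq_zero_of_le h, mul_zero]

lemma tvDist_withDensity_le {Ω : Type*} [MeasurableSpace Ω] (μ : Measure Ω) (p q : Ω → ℝ≥0∞)
    (hp : Measurable p) (hq : Measurable q) :
    tvDist (μ.withDensity p) (μ.withDensity q)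
      ≤ (∫⁻ x, (p x - q x) ∂μ) ⊔ (∫⁻ x, (q x - p x) ∂μ) := by
  have key : ∀ (p q : Ω → ℝ≥0∞), Measurable p → Measurable q → ∀ s : Set Ω, MeasurableSet s →
      μ.withDensity p s - μ.withDensity q s ≤ ∫⁻ x, (p x - q x) ∂μ := by
    intro p q hp hq s hs
    rw [withDensity_apply _ hs, withDensity_apply _ hs, tsub_le_iff_right]
    calc ∫⁻ x in s, p x ∂μ ≤ ∫⁻ x in s, (p x - q x) + q x ∂μ :=
          setLIntegral_mono (by fun_prop) (fun x _ => le_tsub_add)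
      _ = ∫⁻ x in s, (p x - q x) ∂μ + ∫⁻ x in s, q x ∂μ := lintegral_add_left (by fun_prop) _
      _ ≤ ∫⁻ x, (p x - q x) ∂μ + ∫⁻ x in s, q x ∂μ := by
          gcongr; exact Measure.restrict_le_self
  refine iSup₂_le fun s hs => sup_le_sup ?_ ?_
  · exact key p q hp hq s hs
  · exact key q p hq hp s hs


lemma lintegral_pi_prod {Θ : Type*} [MeasurableSpace Θ] (μ : Measure Θ) [SigmaFinite μ] :
    ∀ {n : ℕ} (g : Fin n → Θ → ℝ≥0∞), (∀ i, Measurable (g i)) →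
      ∫⁻ θs, ∏ i, g i (θs i) ∂(Measure.pi fun _ : Fin n => μ) = ∏ i, ∫⁻ x, g i x ∂μ := by
  intro n
  induction n with
  | zero =>
      intro g hg
      simp [lintegral_const, Measure.pi_univ]
  | succ n ih =>
      intro g hg
      have hmp := (measurePreserving_piFinSuccAbove (fun _ : Fin (n + 1) => μ) 0).symm
      rw [← hmp.map_eq]
      rw [MeasureTheory.lintegral_map_equiv]
      have heq : ∀ y : Θ × (Fin n → Θ),
          (∏ i, g i (((MeasurableEquiv.piFinSuccAbove (fun _ : Fin (n+1) => Θ) 0).symm y) i))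
            = g 0 y.1 * ∏ j : Fin n, g (Fin.succAbove 0 j) (y.2 j) := by
        intro y
        rw [Fin.prod_univ_succAbove _ 0]
        simp [MeasurableEquiv.piFinSuccAbove_symm_apply, Fin.insertNth_apply_same,
          Fin.insertNth_apply_succAbove]
      simp_rw [heq]
      refine (lintegral_prod_mul (f := g 0)
        (g := fun ys : Fin n → Θ => ∏ j, g (Fin.succAbove 0 j) (ys j)) (hg 0).aemeasurable
        (Finset.measurable_prod univ fun j _ =>
          (hg _).comp (measurable_pi_apply j)).aemeasurable).trans ?_
      rw [ih (fun j => g (Fin.succAbove 0 j)) (fun j => hg _)]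
      rw [Fin.prod_univ_succAbove (fun i => ∫⁻ x, g i x ∂μ) 0]

lemma pi_withDensity {Θ : Type*} [MeasurableSpace Θ] (ν : Measure Θ) [SigmaFinite ν]
    (u : Θ → ℝ≥0∞) (hu : Measurable u) [SigmaFinite (ν.withDensity u)] (n : ℕ) :
    Measure.pi (fun _ : Fin n => ν.withDensity u)
      = (Measure.pi fun _ : Fin n => ν).withDensity (fun θs => ∏ b, u (θs b)) := by
  refine Measure.pi_eq fun s hs => ?_
  rw [withDensity_apply _ (MeasurableSet.univ_pi hs),
    ← lintegral_indicator (MeasurableSet.univ_pi hs)]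
  have heq : ∀ θs : Fin n → Θ, (Set.univ.pi s).indicator (fun θs => ∏ b, u (θs b)) θs
      = ∏ b, (s b).indicator u (θs b) := by
    intro θs
    by_cases h : θs ∈ Set.univ.pi s
    · rw [Set.indicator_of_mem h]
      exact Finset.prod_congr rfl fun b _ =>
        (Set.indicator_of_mem (h b (Set.mem_univ b)) u).symm
    · rw [Set.indicator_of_notMem h]
      obtain ⟨b, hb⟩ := not_forall.mp (fun hall => h (Set.mem_univ_pi.mpr hall))
      exact (Finset.prod_eq_zero (Finset.mem_univ b) (Set.indicator_of_notMem hb u)).symm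
  simp_rw [heq]
  rw [lintegral_pi_prod ν (fun b => (s b).indicator u)
    (fun b => hu.indicator (hs b))]
  exact Finset.prod_congr rfl fun b _ => by
    rw [withDensity_apply _ (hs b), ← lintegral_indicator (hs b)]

lemma lintegral_eval_pi {Θ : Type*} [MeasurableSpace Θ] (P : Measure Θ) [IsProbabilityMeasure P]
    {n : ℕ} (g : Θ → ℝ≥0∞) (hg : Measurable g) (k : Fin n) :
    ∫⁻ θs, g (θs k) ∂(Measure.pi fun _ : Fin n => P) = ∫⁻ x, g x ∂P := by
  have h := lintegral_pi_prod P (n := n) (fun i => if i = k then g else fun _ => 1)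
    (fun i => by split <;> first | exact hg | exact measurable_const)
  have hprod : ∀ θs : Fin n → Θ,
      (∏ i, (if i = k then g else fun _ => 1) (θs i)) = g (θs k) := by
    intro θs
    rw [← Finset.mul_prod_erase univ _ (Finset.mem_univ k), if_pos rfl,
      Finset.prod_eq_one, mul_one]
    intro i hi
    rw [if_neg (Finset.mem_erase.mp hi).1]
  have hint : ∀ i : Fin n, (∫⁻ x, (if i = k then g else fun _ => 1) x ∂P)
      = if i = k then ∫⁻ x, g x ∂P else 1 := by
    intro i
    split
    · rfl
    · simp
  simp_rw [hprod, hint] at h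
  rw [h, ← Finset.mul_prod_erase univ _ (Finset.mem_univ k), if_pos rfl,
    Finset.prod_eq_one, mul_one]
  intro i hi
  rw [if_neg (Finset.mem_erase.mp hi).1]

lemma lintegral_eval_pair_pi {Θ : Type*} [MeasurableSpace Θ] (P : Measure Θ)
    [IsProbabilityMeasure P] {n : ℕ} (g g' : Θ → ℝ≥0∞) (hg : Measurable g)
    (hg' : Measurable g') {j k : Fin n} (hjk : j ≠ k) :
    ∫⁻ θs, g (θs j) * g' (θs k) ∂(Measure.pi fun _ : Fin n => P)
      = (∫⁻ x, g x ∂P) * ∫⁻ x, g' x ∂P := by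
  have h := lintegral_pi_prod P (n := n)
    (fun i => if i = j then g else if i = k then g' else fun _ => 1)
    (fun i => by
                 split
                 · exact hg
                 split <;> first | exact hg' | exact measurable_const)
  have hprod : ∀ θs : Fin n → Θ,
      (∏ i, (if i = j then g else if i = k then g' else fun _ => 1) (θs i))
        = g (θs j) * g' (θs k) := by
    intro θs
    rw [← Finset.mul_prod_erase univ _ (Finset.mem_univ j), if_pos rfl]
    congr 1
    rw [← Finset.mul_prod_erase (univ.erase j) _
      (Finset.mem_erase.mpr ⟨Ne.symm hjk, Finset.mem_univ k⟩), if_neg hjk.symm, if_pos rfl]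
    rw [Finset.prod_eq_one, mul_one]
    intro i hi
    rw [if_neg (Finset.mem_erase.mp (Finset.mem_erase.mp hi).2).1,
      if_neg (Finset.mem_erase.mp hi).1]
  have hint : ∀ i, (∫⁻ x, (if i = j then g else if i = k then g' else fun _ => 1) x ∂P)
      = if i = j then ∫⁻ x, g x ∂P else if i = k then ∫⁻ x, g' x ∂P else 1 := by
    intro i
    split
    · rfl
    split
    · rfl
    · simp
  simp_rw [hprod, hint] at h
  rw [h, ← Finset.mul_prod_erase univ _ (Finset.mem_univ j), if_pos rfl]
  congr 1
  rw [← Finset.mul_prod_erase (univ.erase j) _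
    (Finset.mem_erase.mpr ⟨Ne.symm hjk, Finset.mem_univ k⟩), if_neg hjk.symm, if_pos rfl]
  rw [Finset.prod_eq_one, mul_one]
  intro i hi
  rw [if_neg (Finset.mem_erase.mp (Finset.mem_erase.mp hi).2).1,
    if_neg (Finset.mem_erase.mp hi).1]

lemma ae_pi_coord {Θ : Type*} [MeasurableSpace Θ] {μ : Measure Θ} [SigmaFinite μ] {n : ℕ}
    {p : Θ → Prop} (hp : ∀ᵐ θ ∂μ, p θ) :
    ∀ᵐ θs ∂(Measure.pi fun _ : Fin n => μ), ∀ k, p (θs k) := by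
  rw [ae_all_iff]
  intro k
  have h0 : μ {θ | ¬ p θ} = 0 := hp
  exact ae_iff.mpr (Measure.pi_eval_preimage_null (μ := fun _ : Fin n => μ) (i := k) h0)

lemma key_chi_bound {Θ : Type*} [MeasurableSpace Θ] (ν : Measure Θ) [SigmaFinite ν]
    (u v : Θ → ℝ≥0∞) (hu : Measurable u) (hv : Measurable v)
    (hu1 : ∫⁻ θ, u θ ∂ν = 1) (hv1 : ∫⁻ θ, v θ ∂ν = 1)
    (B : ℕ) (hB : 0 < B) :
    (∫⁻ θs : Fin B → Θ, ((∏ b, u (θs b)) - (B : ℝ≥0∞)⁻¹ * ∑ k, v (θs k)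
        * ∏ b ∈ Finset.univ.erase k, u (θs b)) ∂(Measure.pi fun _ => ν))
      ⊔ (∫⁻ θs : Fin B → Θ, ((B : ℝ≥0∞)⁻¹ * ∑ k, v (θs k)
        * ∏ b ∈ Finset.univ.erase k, u (θs b) - ∏ b, u (θs b)) ∂(Measure.pi fun _ => ν))
      ≤ chiSq (ν.withDensity v) (ν.withDensity u) ^ (1 / 2 : ℝ)
          / (2 * (B : ℝ≥0∞) ^ (1 / 2 : ℝ)) := by
  have hBne : (B : ℝ≥0∞) ≠ 0 := Nat.cast_ne_zero.mpr hB.ne'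
  have hBnetop : (B : ℝ≥0∞) ≠ ∞ := natCast_ne_top B
  have hDenne : (2 * (B : ℝ≥0∞) ^ (1 / 2 : ℝ)) ≠ ∞ :=
    ENNReal.mul_ne_top (by simp) (ENNReal.rpow_ne_top_of_nonneg (by norm_num) hBnetop)
  haveI hPprob : IsProbabilityMeasure (ν.withDensity u) :=
    ⟨by rw [withDensity_apply _ MeasurableSet.univ, setLIntegral_univ, hu1]⟩
  haveI hVprob : IsProbabilityMeasure (ν.withDensity v) :=
    ⟨by rw [withDensity_apply _ MeasurableSet.univ, setLIntegral_univ, hv1]⟩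
  set P := ν.withDensity u with hP
  by_cases hac : ν.withDensity v ≪ P
  swap
  · rw [chiSq, if_neg hac, ENNReal.top_rpow_of_pos (by norm_num),
      ENNReal.div_eq_top.mpr (Or.inr ⟨rfl, hDenne⟩)]
    exact le_top
  set h := (ν.withDensity v).rnDeriv P with hh
  have hhm : Measurable h := Measure.measurable_rnDeriv _ _
  set χ := ∫⁻ θ, ((h θ - 1) ⊔ (1 - h θ)) ^ 2 ∂P with hχ
  have hchiSq : chiSq (ν.withDensity v) P = χ := by rw [chiSq, if_pos hac]
  rw [hchiSq]
  by_cases hχtop : χ = ∞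
  · rw [hχtop, ENNReal.top_rpow_of_pos (by norm_num),
      ENNReal.div_eq_top.mpr (Or.inr ⟨rfl, hDenne⟩)]
    exact le_top
  have hveq : v =ᵐ[ν] fun θ => u θ * h θ := by
    have heqm : ν.withDensity (fun θ => u θ * h θ) = ν.withDensity v := by
      rw [show (fun θ => u θ * h θ) = u * h from rfl, withDensity_mul ν hu hhm, ← hP,
        Measure.withDensity_rnDeriv_eq _ _ hac]
    exact ((withDensity_eq_iff_of_sigmaFinite hv.aemeasurable
      (hu.mul hhm).aemeasurable).mp heqm.symm)
  set s := fun θ => h θ - 1 with hs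
  set t := fun θ => 1 - h θ with ht
  have hsm : Measurable s := hhm.sub measurable_const
  have htm : Measurable t := measurable_const.sub hhm
  have hδt_le : ∫⁻ θ, t θ ∂P ≤ 1 := by
    calc ∫⁻ θ, t θ ∂P ≤ ∫⁻ _, 1 ∂P := lintegral_mono fun θ => tsub_le_self
    _ = 1 := by simp
  set δ := ∫⁻ θ, t θ ∂P with hδ
  have hδne : δ ≠ ∞ := (hδt_le.trans_lt one_lt_top).ne
  have hh1 : ∫⁻ θ, h θ ∂P = 1 := by
    rw [hh, Measure.lintegral_rnDeriv hac]
    exact hVprob.measure_univ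
  have hst : ∫⁻ θ, s θ ∂P = δ := by
    have heq2 : (1 : ℝ≥0∞) + δ = 1 + ∫⁻ θ, s θ ∂P := by
      have := lintegral_congr (μ := P) (fun θ => ennreal_addswap (h θ) 1)
      rwa [lintegral_add_left hhm, lintegral_add_left measurable_const, hh1,
        lintegral_one, measure_univ] at this
    exact ((ENNReal.add_right_inj one_ne_top).mp heq2).symm
  have hχsum : χ = (∫⁻ θ, t θ ^ 2 ∂P) + ∫⁻ θ, s θ ^ 2 ∂P := by
    rw [hχ]
    have hm2 : ∀ θ, ((h θ - 1) ⊔ (1 - h θ)) ^ 2 = t θ ^ 2 + s θ ^ 2 := by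
      intro θ
      rcases le_total (h θ) 1 with hle | hle
      · rw [hs, ht]; simp [tsub_eq_zero_of_le hle]
      · rw [hs, ht]; simp [tsub_eq_zero_of_le hle]
    rw [lintegral_congr hm2, lintegral_add_left (htm.pow_const 2)]
  set Q := Measure.pi (fun _ : Fin B => P) with hQ
  haveI hQprob : IsProbabilityMeasure Q := by rw [hQ]; infer_instance
  -- measurable product density
  have hAm : Measurable fun θs : Fin B → Θ => ∏ b, u (θs b) :=
    Finset.measurable_prod univ fun b _ => hu.comp (measurable_pi_apply b)
  -- first reduction: replace the integrand a.e.
  have hufin : ∀ᵐ θ ∂ν, u θ ≠ ∞ :=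
    (ae_lt_top hu (by rw [hu1]; exact one_ne_top)).mono fun θ hθ => hθ.ne
  have hACw : ∀ᵐ θs ∂(Measure.pi fun _ : Fin B => ν),
      ((∏ b, u (θs b)) - (B : ℝ≥0∞)⁻¹ * ∑ k, v (θs k) * ∏ b ∈ Finset.univ.erase k, u (θs b)
        = (∏ b, u (θs b)) * ((1 : ℝ≥0∞) - (B : ℝ≥0∞)⁻¹ * ∑ k, h (θs k)))
      ∧ ((B : ℝ≥0∞)⁻¹ * ∑ k, v (θs k) * ∏ b ∈ Finset.univ.erase k, u (θs b) - ∏ b, u (θs b)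
        = (∏ b, u (θs b)) * ((B : ℝ≥0∞)⁻¹ * ∑ k, h (θs k) - 1)) := by
    filter_upwards [ae_pi_coord hveq, ae_pi_coord hufin] with θs hvh hufin'
    have hAne : (∏ b, u (θs b)) ≠ ∞ :=
      (ENNReal.prod_lt_top fun b _ => (hufin' b).lt_top).ne
    have hC : (B : ℝ≥0∞)⁻¹ * ∑ k, v (θs k) * ∏ b ∈ Finset.univ.erase k, u (θs b)
        = (∏ b, u (θs b)) * ((B : ℝ≥0∞)⁻¹ * ∑ k, h (θs k)) := by
      have hterm : ∀ k : Fin B, v (θs k) * ∏ b ∈ Finset.univ.erase k, u (θs b)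
          = (∏ b, u (θs b)) * h (θs k) := by
        intro k
        rw [hvh k, mul_comm (u (θs k)) (h (θs k)), mul_assoc,
          Finset.mul_prod_erase univ (fun b => u (θs b)) (Finset.mem_univ k), mul_comm]
      rw [Finset.sum_congr rfl (fun k _ => hterm k), ← Finset.mul_sum]
      ring
    refine ⟨?_, ?_⟩
    · rw [hC, ennreal_mul_sub' _ _ _ hAne, mul_one]
    · rw [hC, ennreal_mul_sub' _ _ _ hAne, mul_one]
  -- converting to integrals over Q
  haveI : SigmaFinite (ν.withDensity u) := inferInstance
  have hIA : ∀ (G : (Fin B → Θ) → ℝ≥0∞), Measurable G →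
      ∫⁻ θs, (∏ b, u (θs b)) * G θs ∂(Measure.pi fun _ : Fin B => ν) = ∫⁻ θs, G θs ∂Q := by
    intro G hG
    rw [hQ, hP, pi_withDensity ν u hu B,
      lintegral_withDensity_eq_lintegral_mul _ hAm hG]
    rfl
  -- sum identities
  set T := fun θs : Fin B → Θ => ∑ k, t (θs k) with hT
  set S := fun θs : Fin B → Θ => ∑ k, s (θs k) with hS
  have hTm : Measurable T := Finset.measurable_sum univ fun k _ => htm.comp (measurable_pi_apply k)
  have hSm : Measurable S := Finset.measurable_sum univ fun k _ => hsm.comp (measurable_pi_apply k)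
  have hhfin : ∀ᵐ θ ∂P, h θ ≠ ∞ :=
    (Measure.rnDeriv_lt_top _ _).mono fun θ hθ => hθ.ne
  have hsum_id : ∀ᵐ θs ∂Q,
      ((1 : ℝ≥0∞) - (B : ℝ≥0∞)⁻¹ * ∑ k, h (θs k) ≤ (B : ℝ≥0∞)⁻¹ * (T θs - S θs))
      ∧ ((B : ℝ≥0∞)⁻¹ * ∑ k, h (θs k) - 1 ≤ (B : ℝ≥0∞)⁻¹ * (S θs - T θs)) := by
    filter_upwards [ae_pi_coord hhfin] with θs hfin
    have heq : (∑ k, h (θs k)) + T θs = (B : ℝ≥0∞) + S θs := by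
      rw [hT, hS, ← Finset.sum_add_distrib,
        Finset.sum_congr rfl (fun k _ => ennreal_addswap (h (θs k)) 1),
        Finset.sum_add_distrib, Finset.sum_const, Finset.card_univ, Fintype.card_fin,
        nsmul_eq_mul, mul_one]
    have hsfin : S θs ≠ ∞ := by
      rw [hS]
      exact (ENNReal.sum_lt_top.mpr fun k _ =>
        (tsub_le_self.trans_lt (hfin k).lt_top)).ne
    have htfin : T θs ≠ ∞ := by
      rw [hT]
      exact (ENNReal.sum_lt_top.mpr fun k _ =>
        ((tsub_le_self : 1 - h (θs k) ≤ 1).trans_lt one_lt_top)).ne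
    have hBinvne : ((B : ℝ≥0∞)⁻¹ : ℝ≥0∞) ≠ ∞ := ENNReal.inv_ne_top.mpr hBne
    constructor
    · have h1 : (1 : ℝ≥0∞) - (B : ℝ≥0∞)⁻¹ * ∑ k, h (θs k)
          = (B : ℝ≥0∞)⁻¹ * ((B : ℝ≥0∞) - ∑ k, h (θs k)) := by
        rw [ennreal_mul_sub' _ _ _ hBinvne, ENNReal.inv_mul_cancel hBne hBnetop]
      rw [h1]
      exact mul_le_mul_right (ennreal_sub_le_of_add_eq hsfin heq) _
    · have h1 : (B : ℝ≥0∞)⁻¹ * ∑ k, h (θs k) - 1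
          = (B : ℝ≥0∞)⁻¹ * (∑ k, h (θs k) - (B : ℝ≥0∞)) := by
        rw [ennreal_mul_sub' _ _ _ hBinvne, ENNReal.inv_mul_cancel hBne hBnetop]
      rw [h1]
      exact mul_le_mul_right (ennreal_sub_le_of_add_eq htfin heq.symm) _
  -- expectations of T and S
  have hTi : ∫⁻ θs, T θs ∂Q = B * δ := by
    rw [hT, show (∫⁻ θs : Fin B → Θ, ∑ k, t (θs k) ∂Q) = ∑ k : Fin B, ∫⁻ θs, t (θs k) ∂Q from
      lintegral_finset_sum univ (fun k _ => htm.comp (measurable_pi_apply k))]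
    rw [Finset.sum_congr rfl (fun k _ => lintegral_eval_pi P t htm k), Finset.sum_const,
      Finset.card_univ, Fintype.card_fin, nsmul_eq_mul, hδ]
  have hSi : ∫⁻ θs, S θs ∂Q = B * δ := by
    rw [hS, show (∫⁻ θs : Fin B → Θ, ∑ k, s (θs k) ∂Q) = ∑ k : Fin B, ∫⁻ θs, s (θs k) ∂Q from
      lintegral_finset_sum univ (fun k _ => hsm.comp (measurable_pi_apply k))]
    rw [Finset.sum_congr rfl (fun k _ => lintegral_eval_pi P s hsm k), Finset.sum_const,
      Finset.card_univ, Fintype.card_fin, nsmul_eq_mul, hst]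
  have hBδne : (B : ℝ≥0∞) * δ ≠ ∞ := ENNReal.mul_ne_top hBnetop hδne
  set w := ∫⁻ θs, (T θs - S θs) ∂Q with hw
  have hwsym : ∫⁻ θs, (S θs - T θs) ∂Q = w := by
    have heq3 : ∫⁻ θs, (T θs + (S θs - T θs)) ∂Q = ∫⁻ θs, (S θs + (T θs - S θs)) ∂Q :=
      lintegral_congr fun θs => ennreal_addswap _ _
    rw [lintegral_add_left hTm, lintegral_add_left hSm, hTi, hSi] at heq3
    exact (ENNReal.add_right_inj hBδne).mp heq3
  -- second moments
  have hprodsum : ∀ (a b : Θ → ℝ≥0∞), Measurable a → Measurable b →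
      ∫⁻ θs, (∑ k, a (θs k)) * (∑ k, b (θs k)) ∂Q
        = B * (∫⁻ θ, a θ * b θ ∂P)
          + (B * (B - 1 : ℕ)) * ((∫⁻ θ, a θ ∂P) * ∫⁻ θ, b θ ∂P) := by
    intro a b ham hbm
    have hexp : ∀ θs : Fin B → Θ, (∑ k, a (θs k)) * (∑ k, b (θs k))
        = ∑ j, ∑ k, a (θs j) * b (θs k) := fun θs => Finset.sum_mul_sum _ _ _ _
    rw [lintegral_congr hexp, show (∫⁻ θs : Fin B → Θ, ∑ j, ∑ k, a (θs j) * b (θs k) ∂Q)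
        = ∑ j : Fin B, ∫⁻ θs, ∑ k, a (θs j) * b (θs k) ∂Q from
      lintegral_finset_sum univ (fun j _ => Finset.measurable_sum univ fun k _ =>
        (ham.comp (measurable_pi_apply j)).mul (hbm.comp (measurable_pi_apply k)))]
    have hrow : ∀ j : Fin B, ∫⁻ θs, ∑ k, a (θs j) * b (θs k) ∂Q
        = (∫⁻ θ, a θ * b θ ∂P) + ((B - 1 : ℕ)) * ((∫⁻ θ, a θ ∂P) * ∫⁻ θ, b θ ∂P) := by
      intro j
      rw [show (∫⁻ θs : Fin B → Θ, ∑ k, a (θs j) * b (θs k) ∂Q)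
          = ∑ k : Fin B, ∫⁻ θs, a (θs j) * b (θs k) ∂Q from
        lintegral_finset_sum univ (fun k _ =>
          (ham.comp (measurable_pi_apply j)).mul (hbm.comp (measurable_pi_apply k)))]
      rw [← Finset.add_sum_erase univ _ (Finset.mem_univ j)]
      congr 1
      · exact lintegral_eval_pi P (fun θ => a θ * b θ) (ham.mul hbm) j
      · rw [Finset.sum_congr rfl (fun k hk =>
          lintegral_eval_pair_pi P a b ham hbm (Ne.symm (Finset.mem_erase.mp hk).1)),
          Finset.sum_const, Finset.card_erase_of_mem (Finset.mem_univ j), Finset.card_univ,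
          Fintype.card_fin, nsmul_eq_mul]
    rw [Finset.sum_congr rfl (fun j _ => hrow j), Finset.sum_const, Finset.card_univ,
      Fintype.card_fin, nsmul_eq_mul, mul_add, mul_assoc]
  have hts0 : ∫⁻ θ, t θ * s θ ∂P = 0 := by
    have : ∀ θ, t θ * s θ = 0 := fun θ => ennreal_sub_mul_sub_symm 1 (h θ)
    simp [lintegral_congr this]
  -- U = (T - S) + (S - T)
  have hUm : Measurable fun θs => (T θs - S θs) + (S θs - T θs) :=
    (hTm.sub hSm).add (hSm.sub hTm)
  have hU2 : ∫⁻ θs, ((T θs - S θs) + (S θs - T θs)) ^ 2 ∂Q = B * χ := by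
    have hpt : ∀ θs, ((T θs - S θs) + (S θs - T θs)) ^ 2 + 2 * (T θs * S θs)
        = T θs ^ 2 + S θs ^ 2 := by
      intro θs
      have hsq : ((T θs - S θs) + (S θs - T θs)) ^ 2
          = (T θs - S θs) ^ 2 + (S θs - T θs) ^ 2 := by
        rw [add_sq, mul_assoc, ennreal_sub_mul_sub_symm, mul_zero, add_zero]
      rw [hsq, ennreal_pt]
    have hint : (∫⁻ θs, ((T θs - S θs) + (S θs - T θs)) ^ 2 ∂Q) + 2 * ∫⁻ θs, T θs * S θs ∂Q
        = (∫⁻ θs, T θs ^ 2 ∂Q) + ∫⁻ θs, S θs ^ 2 ∂Q := by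
      rw [← lintegral_const_mul 2 (f := fun θs => T θs * S θs) (hTm.mul hSm), ← lintegral_add_left (hUm.pow_const 2),
        ← lintegral_add_left ((hTm.pow_const 2))]
      exact lintegral_congr hpt
    have hTT : ∫⁻ θs, T θs ^ 2 ∂Q
        = B * (∫⁻ θ, t θ * t θ ∂P) + (B * (B - 1 : ℕ)) * (δ * δ) := by
      have : ∀ θs, T θs ^ 2 = (∑ k, t (θs k)) * (∑ k, t (θs k)) := fun θs => pow_two (T θs)
      rw [lintegral_congr this, hprodsum t t htm htm, hδ]
    have hSS : ∫⁻ θs, S θs ^ 2 ∂Q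
        = B * (∫⁻ θ, s θ * s θ ∂P) + (B * (B - 1 : ℕ)) * (δ * δ) := by
      have : ∀ θs, S θs ^ 2 = (∑ k, s (θs k)) * (∑ k, s (θs k)) := fun θs => pow_two (S θs)
      rw [lintegral_congr this, hprodsum s s hsm hsm, hst]
    have hTS : ∫⁻ θs, T θs * S θs ∂Q = (B * (B - 1 : ℕ)) * (δ * δ) := by
      rw [hT, hS, hprodsum t s htm hsm, hts0, hδ, hst, mul_zero, zero_add]
    rw [hTT, hSS, hTS] at hint
    have hcne : (2 : ℝ≥0∞) * ((B * (B - 1 : ℕ)) * (δ * δ)) ≠ ∞ := by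
      refine ENNReal.mul_ne_top (by simp) (ENNReal.mul_ne_top
        (ENNReal.mul_ne_top hBnetop (natCast_ne_top _)) (ENNReal.mul_ne_top hδne hδne))
    have hre : B * (∫⁻ θ, t θ * t θ ∂P) + (B * (B - 1 : ℕ)) * (δ * δ)
        + (B * (∫⁻ θ, s θ * s θ ∂P) + (B * (B - 1 : ℕ)) * (δ * δ))
        = (B * (∫⁻ θ, t θ * t θ ∂P) + B * (∫⁻ θ, s θ * s θ ∂P))
          + 2 * ((B * (B - 1 : ℕ)) * (δ * δ)) := by ring
    rw [hre] at hint
    have hcancel : ∫⁻ θs, ((T θs - S θs) + (S θs - T θs)) ^ 2 ∂Q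
        = B * (∫⁻ θ, t θ * t θ ∂P) + B * (∫⁻ θ, s θ * s θ ∂P) := by
      have h1 := hint
      rw [add_comm (∫⁻ θs, ((T θs - S θs) + (S θs - T θs)) ^ 2 ∂Q)
        (2 * ((B * ((B : ℕ) - 1 : ℕ)) * (δ * δ))),
        add_comm (B * (∫⁻ θ, t θ * t θ ∂P) + B * (∫⁻ θ, s θ * s θ ∂P))
        (2 * ((B * ((B : ℕ) - 1 : ℕ)) * (δ * δ)))] at h1
      exact (ENNReal.add_right_inj hcne).mp h1
    rw [hcancel, hχsum, mul_add]
    congr 1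
    · exact congrArg (fun z => (B : ℝ≥0∞) * z) (lintegral_congr fun θ => (pow_two (t θ)).symm)
    · exact congrArg (fun z => (B : ℝ≥0∞) * z) (lintegral_congr fun θ => (pow_two (s θ)).symm)
  -- Cauchy-Schwarz
  have hCS : 2 * w ≤ ((B : ℝ≥0∞) * χ) ^ (1 / 2 : ℝ) := by
    have hU1 : ∫⁻ θs, ((T θs - S θs) + (S θs - T θs)) ∂Q = 2 * w := by
      rw [lintegral_add_left (f := fun θs => T θs - S θs) (hTm.sub hSm), hwsym, ← hw, two_mul]
    have hconj : Real.HolderConjugate 2 2 := Real.HolderConjugate.two_two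
    have hcs := ENNReal.lintegral_mul_le_Lp_mul_Lq Q hconj hUm.aemeasurable
      (aemeasurable_const : AEMeasurable (fun _ : Fin B → Θ => (1 : ℝ≥0∞)) Q)
    simp only [Pi.mul_apply, mul_one, ENNReal.one_rpow, lintegral_one, measure_univ,
      ENNReal.one_rpow] at hcs
    rw [hU1] at hcs
    have h2 : ∀ z : ℝ≥0∞, z ^ (2 : ℝ) = z ^ 2 := fun z => by
      rw [show (2 : ℝ) = ((2 : ℕ) : ℝ) by norm_num, ENNReal.rpow_natCast]
    simp only [h2] at hcs
    rw [hU2] at hcs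
    exact hcs
  have hwb : w ≤ ((B : ℝ≥0∞) * χ) ^ (1 / 2 : ℝ) / 2 := by
    rw [ENNReal.le_div_iff_mul_le (Or.inl two_ne_zero) (Or.inl ENNReal.ofNat_ne_top), mul_comm]
    exact hCS
  have hfinal : (B : ℝ≥0∞)⁻¹ * w ≤ χ ^ (1 / 2 : ℝ) / (2 * (B : ℝ≥0∞) ^ (1 / 2 : ℝ)) := by
    refine le_trans (mul_le_mul_right hwb _) (le_of_eq ?_)
    have hsplit : ((B : ℝ≥0∞) * χ) ^ (1 / 2 : ℝ)
        = (B : ℝ≥0∞) ^ (1 / 2 : ℝ) * χ ^ (1 / 2 : ℝ) :=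
      ENNReal.mul_rpow_of_nonneg _ _ (by norm_num : (0:ℝ) ≤ 1 / 2)
    have h2B : ((2 : ℝ≥0∞) * (B : ℝ≥0∞) ^ (1 / 2 : ℝ))⁻¹
        = 2⁻¹ * ((B : ℝ≥0∞) ^ (1 / 2 : ℝ))⁻¹ :=
      ENNReal.mul_inv (Or.inl two_ne_zero) (Or.inl ENNReal.ofNat_ne_top)
    have hBinv : (B : ℝ≥0∞)⁻¹ * (B : ℝ≥0∞) ^ (1 / 2 : ℝ) = ((B : ℝ≥0∞) ^ (1 / 2 : ℝ))⁻¹ := by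
      rw [← ENNReal.rpow_neg_one, ← ENNReal.rpow_add _ _ hBne hBnetop, ← ENNReal.rpow_neg]
      congr 1
      norm_num
    calc (B : ℝ≥0∞)⁻¹ * (((B : ℝ≥0∞) * χ) ^ (1 / 2 : ℝ) / 2)
        = ((B : ℝ≥0∞)⁻¹ * (B : ℝ≥0∞) ^ (1 / 2 : ℝ)) * χ ^ (1 / 2 : ℝ) * 2⁻¹ := by
          rw [hsplit, div_eq_mul_inv]; ring
      _ = χ ^ (1 / 2 : ℝ) * (2⁻¹ * ((B : ℝ≥0∞) ^ (1 / 2 : ℝ))⁻¹) := by rw [hBinv]; ring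
      _ = χ ^ (1 / 2 : ℝ) * ((2 : ℝ≥0∞) * (B : ℝ≥0∞) ^ (1 / 2 : ℝ))⁻¹ := by rw [h2B]
      _ = χ ^ (1 / 2 : ℝ) / (2 * (B : ℝ≥0∞) ^ (1 / 2 : ℝ)) := (div_eq_mul_inv _ _).symm
  -- measurability of the G functions
  have hsummeas : Measurable fun θs : Fin B → Θ => (B : ℝ≥0∞)⁻¹ * ∑ k, h (θs k) :=
    (Finset.measurable_sum univ fun k _ => hhm.comp (measurable_pi_apply k)).const_mul _
  refine sup_le ?_ ?_
  · calc ∫⁻ θs, ((∏ b, u (θs b)) - (B : ℝ≥0∞)⁻¹ * ∑ k, v (θs k)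
          * ∏ b ∈ Finset.univ.erase k, u (θs b)) ∂(Measure.pi fun _ => ν)
        = ∫⁻ θs, (∏ b, u (θs b)) * ((1 : ℝ≥0∞) - (B : ℝ≥0∞)⁻¹ * ∑ k, h (θs k))
            ∂(Measure.pi fun _ => ν) :=
          lintegral_congr_ae (hACw.mono fun θs hθ => hθ.1)
      _ = ∫⁻ θs, ((1 : ℝ≥0∞) - (B : ℝ≥0∞)⁻¹ * ∑ k, h (θs k)) ∂Q :=
          hIA _ (measurable_const.sub hsummeas)
      _ ≤ ∫⁻ θs, (B : ℝ≥0∞)⁻¹ * (T θs - S θs) ∂Q :=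
          lintegral_mono_ae (hsum_id.mono fun θs hθ => hθ.1)
      _ = (B : ℝ≥0∞)⁻¹ * w := by
          rw [lintegral_const_mul' _ _ (ENNReal.inv_ne_top.mpr hBne), ← hw]
      _ ≤ _ := hfinal
  · calc ∫⁻ θs, ((B : ℝ≥0∞)⁻¹ * ∑ k, v (θs k)
          * ∏ b ∈ Finset.univ.erase k, u (θs b) - ∏ b, u (θs b)) ∂(Measure.pi fun _ => ν)
        = ∫⁻ θs, (∏ b, u (θs b)) * ((B : ℝ≥0∞)⁻¹ * ∑ k, h (θs k) - 1)
            ∂(Measure.pi fun _ => ν) :=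
          lintegral_congr_ae (hACw.mono fun θs hθ => hθ.2)
      _ = ∫⁻ θs, ((B : ℝ≥0∞)⁻¹ * ∑ k, h (θs k) - 1) ∂Q :=
          hIA _ (hsummeas.sub measurable_const)
      _ ≤ ∫⁻ θs, (B : ℝ≥0∞)⁻¹ * (S θs - T θs) ∂Q :=
          lintegral_mono_ae (hsum_id.mono fun θs hθ => hθ.2)
      _ = (B : ℝ≥0∞)⁻¹ * w := by
          rw [lintegral_const_mul' _ _ (ENNReal.inv_ne_top.mpr hBne), hwsym]
      _ ≤ _ := hfinal

end ACSSHelpers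

/-- **Step 4 of the validity proof: TV bound for corrupting one posterior draw.** Let
`X ~ f_{θ₀}`; given `X`, let `Z = (θ̂_1, …, θ̂_B)` be i.i.d. draws from the posterior
`π(· | X)`, and let `Z′` replace a uniformly chosen coordinate by a draw from the posterior
`π₀(· | X)` under the prior `π₀`. Then the TV distance between the joint laws of `(X, Z)` and
`(X, Z′)` is at most `Δ(π₀) / (2√B)`. -/
theorem tvDist_corrupted_posterior_draw_le
    {Θ 𝒳 : Type*} [MeasurableSpace Θ] [MeasurableSpace 𝒳]
    (νΘ : Measure Θ) (ν𝒳 : Measure 𝒳) [SigmaFinite νΘ] [SigmaFinite ν𝒳]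
    (f : Θ → 𝒳 → ℝ≥0∞) (hf : Measurable (Function.uncurry f))
    (hfprob : ∀ θ, IsProbabilityMeasure (ν𝒳.withDensity (f θ)))
    (π : Θ → ℝ≥0∞) (hπ : Measurable π) (hπpos : ∀ θ, 0 < π θ)
    (hπprob : IsProbabilityMeasure (νΘ.withDensity π))
    (hsupp : ∀ θ x, f θ x ≠ 0 → marg νΘ π f x ≠ 0)
    (B : ℕ) (hB : 1 < B)
    (π0 : Θ → ℝ≥0∞) (hπ0 : Measurable π0)
    (hπ0prob : IsProbabilityMeasure (νΘ.withDensity π0))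
    (hsupp0 : ∀ θ x, f θ x ≠ 0 → marg νΘ π0 f x ≠ 0)
    (θ0 : Θ) :
    tvDist
        ((ν𝒳.prod (Measure.pi fun _ : Fin B => νΘ)).withDensity
          fun p => f θ0 p.1 * ∏ b, postDens νΘ π f p.1 (p.2 b))
        ((ν𝒳.prod (Measure.pi fun _ : Fin B => νΘ)).withDensity
          fun p => f θ0 p.1 * ((B : ℝ≥0∞)⁻¹ *
            ∑ k : Fin B, postDens νΘ π0 f p.1 (p.2 k)
              * ∏ b ∈ Finset.univ.erase k, postDens νΘ π f p.1 (p.2 b)))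
      ≤ priorDelta νΘ ν𝒳 π f θ0 π0 / (2 * (B : ℝ≥0∞) ^ (1 / 2 : ℝ)) := by

  have hf1 : ∀ θ, Measurable (f θ) := fun θ => hf.comp measurable_prodMk_left
  have hfint : ∀ θ, ∫⁻ x, f θ x ∂ν𝒳 = 1 := by
    intro θ
    have := (hfprob θ).measure_univ
    rwa [withDensity_apply _ MeasurableSet.univ, setLIntegral_univ] at this
  have hπint : ∫⁻ θ, π θ ∂νΘ = 1 := by
    have := hπprob.measure_univ
    rwa [withDensity_apply _ MeasurableSet.univ, setLIntegral_univ] at this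
  have hπ0int : ∫⁻ θ, π0 θ ∂νΘ = 1 := by
    have := hπ0prob.measure_univ
    rwa [withDensity_apply _ MeasurableSet.univ, setLIntegral_univ] at this
  -- measurability of marginals and posteriors
  have hmargm : ∀ (π' : Θ → ℝ≥0∞), Measurable π' → Measurable (marg νΘ π' f) := by
    intro π' hπ'
    exact Measurable.lintegral_prod_left' ((hπ'.comp measurable_fst).mul hf)
  have hpostm : ∀ (π' : Θ → ℝ≥0∞), Measurable π' →
      Measurable fun z : 𝒳 × Θ => postDens νΘ π' f z.1 z.2 := by
    intro π' hπ'
    exact ((hπ'.comp measurable_snd).mul (hf.comp measurable_swap)).div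
      ((hmargm π' hπ').comp measurable_fst)
  -- integral of marginal equals one
  have hmargint : ∀ (π' : Θ → ℝ≥0∞), Measurable π' → (∫⁻ θ, π' θ ∂νΘ = 1) →
      ∫⁻ x, marg νΘ π' f x ∂ν𝒳 = 1 := by
    intro π' hπ' hπ'1
    have hswap := lintegral_lintegral_swap (μ := ν𝒳) (ν := νΘ)
      (f := fun x θ => π' θ * f θ x)
      (((hπ'.comp measurable_snd).mul (hf.comp measurable_swap)).aemeasurable)
    calc ∫⁻ x, marg νΘ π' f x ∂ν𝒳 = ∫⁻ θ, ∫⁻ x, π' θ * f θ x ∂ν𝒳 ∂νΘ := hswap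
    _ = ∫⁻ θ, π' θ ∂νΘ := by
        refine lintegral_congr fun θ => ?_
        rw [lintegral_const_mul _ (hf1 θ), hfint θ, mul_one]
    _ = 1 := hπ'1
  have hmarg_fin : ∀ᵐ x ∂ν𝒳, marg νΘ π f x ≠ ∞ :=
    (ae_lt_top (hmargm π hπ) (by rw [hmargint π hπ hπint]; exact one_ne_top)).mono
      fun x hx => hx.ne
  have hmarg0_fin : ∀ᵐ x ∂ν𝒳, marg νΘ π0 f x ≠ ∞ :=
    (ae_lt_top (hmargm π0 hπ0) (by rw [hmargint π0 hπ0 hπ0int]; exact one_ne_top)).mono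
      fun x hx => hx.ne
  have hf0_fin : ∀ᵐ x ∂ν𝒳, f θ0 x < ∞ :=
    ae_lt_top (hf1 θ0) (by rw [hfint θ0]; exact one_ne_top)
  -- posterior densities integrate to one
  have hpost_int : ∀ (π' : Θ → ℝ≥0∞), Measurable π' → ∀ x : 𝒳, marg νΘ π' f x ≠ 0 →
      marg νΘ π' f x ≠ ∞ → ∫⁻ θ, postDens νΘ π' f x θ ∂νΘ = 1 := by
    intro π' hπ' x h0 htop
    have : ∀ θ, postDens νΘ π' f x θ = π' θ * f θ x * (marg νΘ π' f x)⁻¹ := by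
      intro θ; rw [postDens, div_eq_mul_inv]
    rw [lintegral_congr this,
      lintegral_mul_const' _ _ (ENNReal.inv_ne_top.mpr h0)]
    exact ENNReal.mul_inv_cancel h0 htop
  -- the two densities
  set p : 𝒳 × (Fin B → Θ) → ℝ≥0∞ :=
    fun z => f θ0 z.1 * ∏ b, postDens νΘ π f z.1 (z.2 b) with hpdef
  set q : 𝒳 × (Fin B → Θ) → ℝ≥0∞ :=
    fun z => f θ0 z.1 * ((B : ℝ≥0∞)⁻¹ * ∑ k : Fin B, postDens νΘ π0 f z.1 (z.2 k)
      * ∏ b ∈ Finset.univ.erase k, postDens νΘ π f z.1 (z.2 b)) with hqdef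
  have hpm : Measurable p :=
    ((hf1 θ0).comp measurable_fst).mul (Finset.measurable_prod Finset.univ fun b _ =>
      (hpostm π hπ).comp (measurable_fst.prodMk ((measurable_pi_apply b).comp measurable_snd)))
  have hqm : Measurable q := by
    refine ((hf1 θ0).comp measurable_fst).mul (Measurable.const_mul ?_ _)
    refine Finset.measurable_sum Finset.univ fun k _ => Measurable.mul ?_ ?_
    · exact (hpostm π0 hπ0).comp
        (measurable_fst.prodMk ((measurable_pi_apply k).comp measurable_snd))
    · exact Finset.measurable_prod _ fun b _ => (hpostm π hπ).comp
        (measurable_fst.prodMk ((measurable_pi_apply b).comp measurable_snd))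
  refine le_trans (tvDist_withDensity_le _ p q hpm hqm) ?_
  -- notation for the bound
  set R : 𝒳 → ℝ≥0∞ := fun x =>
    chiSq (postMeas νΘ π0 f x) (postMeas νΘ π f x) ^ (1 / 2 : ℝ)
      / (2 * (B : ℝ≥0∞) ^ (1 / 2 : ℝ)) with hRdef
  have hBpos : 0 < B := lt_trans one_pos hB
  have hBne : (B : ℝ≥0∞) ≠ 0 := Nat.cast_ne_zero.mpr hBpos.ne'
  have hden_ne : (2 * (B : ℝ≥0∞) ^ (1 / 2 : ℝ)) ≠ 0 := by
    refine mul_ne_zero two_ne_zero ?_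
    simp [ENNReal.rpow_eq_zero_iff, hBne]
  have hinv_ne_top : ((2 * (B : ℝ≥0∞) ^ (1 / 2 : ℝ))⁻¹ : ℝ≥0∞) ≠ ∞ :=
    ENNReal.inv_ne_top.mpr hden_ne
  -- the inner bound, for a.e. x
  have hinner : ∀ᵐ x ∂ν𝒳,
      (∫⁻ θs, (p (x, θs) - q (x, θs)) ∂(Measure.pi fun _ : Fin B => νΘ)) ≤ f θ0 x * R x
      ∧ (∫⁻ θs, (q (x, θs) - p (x, θs)) ∂(Measure.pi fun _ : Fin B => νΘ)) ≤ f θ0 x * R x := by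
    filter_upwards [hmarg_fin, hmarg0_fin, hf0_fin] with x hx2 hx3 hx1
    by_cases hf0 : f θ0 x = 0
    · have hzero : ∫⁻ _ : Fin B → Θ, (0 : ℝ≥0∞) ∂(Measure.pi fun _ => νΘ) = 0 := lintegral_zero
      constructor <;>
        · refine le_trans (le_of_eq ((lintegral_congr fun θs => ?_).trans hzero)) zero_le
          simp [hpdef, hqdef, hf0]
    · have hm1 : marg νΘ π f x ≠ 0 := hsupp θ0 x hf0
      have hm0 : marg νΘ π0 f x ≠ 0 := hsupp0 θ0 x hf0
      have hum : Measurable (postDens νΘ π f x) :=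
        (hpostm π hπ).comp (measurable_prodMk_left : Measurable fun θ : Θ => (x, θ))
      have hvm : Measurable (postDens νΘ π0 f x) :=
        (hpostm π0 hπ0).comp (measurable_prodMk_left : Measurable fun θ : Θ => (x, θ))
      have hu1 : ∫⁻ θ, postDens νΘ π f x θ ∂νΘ = 1 := hpost_int π hπ x hm1 hx2
      have hv1 : ∫⁻ θ, postDens νΘ π0 f x θ ∂νΘ = 1 := hpost_int π0 hπ0 x hm0 hx3
      have hkey := key_chi_bound νΘ (postDens νΘ π f x) (postDens νΘ π0 f x)
        hum hvm hu1 hv1 B hBpos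
      have hkey1 := le_trans le_sup_left hkey
      have hkey2 := le_trans le_sup_right hkey
      have hchieq : chiSq (νΘ.withDensity (postDens νΘ π0 f x))
          (νΘ.withDensity (postDens νΘ π f x))
          = chiSq (postMeas νΘ π0 f x) (postMeas νΘ π f x) := rfl
      rw [hchieq] at hkey1 hkey2
      constructor
      · calc ∫⁻ θs, (p (x, θs) - q (x, θs)) ∂(Measure.pi fun _ : Fin B => νΘ)
            = ∫⁻ θs, f θ0 x * ((∏ b, postDens νΘ π f x (θs b))
                - (B : ℝ≥0∞)⁻¹ * ∑ k : Fin B, postDens νΘ π0 f x (θs k)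
                  * ∏ b ∈ Finset.univ.erase k, postDens νΘ π f x (θs b))
                ∂(Measure.pi fun _ : Fin B => νΘ) := by
              refine lintegral_congr fun θs => ?_
              rw [hpdef, hqdef]
              exact (ennreal_mul_sub' _ _ _ hx1.ne).symm
          _ = f θ0 x * ∫⁻ θs, ((∏ b, postDens νΘ π f x (θs b))
                - (B : ℝ≥0∞)⁻¹ * ∑ k : Fin B, postDens νΘ π0 f x (θs k)
                  * ∏ b ∈ Finset.univ.erase k, postDens νΘ π f x (θs b))
                ∂(Measure.pi fun _ : Fin B => νΘ) :=
              lintegral_const_mul' _ _ hx1.ne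
          _ ≤ f θ0 x * R x := mul_le_mul_right hkey1 _
      · calc ∫⁻ θs, (q (x, θs) - p (x, θs)) ∂(Measure.pi fun _ : Fin B => νΘ)
            = ∫⁻ θs, f θ0 x * ((B : ℝ≥0∞)⁻¹ * ∑ k : Fin B, postDens νΘ π0 f x (θs k)
                  * ∏ b ∈ Finset.univ.erase k, postDens νΘ π f x (θs b)
                - (∏ b, postDens νΘ π f x (θs b)))
                ∂(Measure.pi fun _ : Fin B => νΘ) := by
              refine lintegral_congr fun θs => ?_
              rw [hpdef, hqdef]
              exact (ennreal_mul_sub' _ _ _ hx1.ne).symm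
          _ = f θ0 x * ∫⁻ θs, ((B : ℝ≥0∞)⁻¹ * ∑ k : Fin B, postDens νΘ π0 f x (θs k)
                  * ∏ b ∈ Finset.univ.erase k, postDens νΘ π f x (θs b)
                - (∏ b, postDens νΘ π f x (θs b)))
                ∂(Measure.pi fun _ : Fin B => νΘ) :=
              lintegral_const_mul' _ _ hx1.ne
          _ ≤ f θ0 x * R x := mul_le_mul_right hkey2 _
  -- total bound
  have htotal : ∫⁻ x, f θ0 x * R x ∂ν𝒳
      = priorDelta νΘ ν𝒳 π f θ0 π0 / (2 * (B : ℝ≥0∞) ^ (1 / 2 : ℝ)) := by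
    have h1 : ∀ x, f θ0 x * R x = (2 * (B : ℝ≥0∞) ^ (1 / 2 : ℝ))⁻¹
        * (f θ0 x * chiSq (postMeas νΘ π0 f x) (postMeas νΘ π f x) ^ (1 / 2 : ℝ)) := by
      intro x
      simp only [hRdef, div_eq_mul_inv]
      ring
    rw [lintegral_congr h1, lintegral_const_mul' _ _ hinv_ne_top]
    rw [priorDelta, lintegral_withDensity_eq_lintegral_mul_non_measurable _ (hf1 θ0) hf0_fin]
    rw [div_eq_mul_inv, mul_comm]
    rfl
  refine sup_le ?_ ?_
  · calc ∫⁻ z, (p z - q z) ∂(ν𝒳.prod (Measure.pi fun _ : Fin B => νΘ))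
        = ∫⁻ x, ∫⁻ θs, (p (x, θs) - q (x, θs)) ∂(Measure.pi fun _ : Fin B => νΘ) ∂ν𝒳 :=
          lintegral_prod _ (hpm.sub hqm).aemeasurable
      _ ≤ ∫⁻ x, f θ0 x * R x ∂ν𝒳 := lintegral_mono_ae (hinner.mono fun x hx => hx.1)
      _ = _ := htotal
  · calc ∫⁻ z, (q z - p z) ∂(ν𝒳.prod (Measure.pi fun _ : Fin B => νΘ))
        = ∫⁻ x, ∫⁻ θs, (q (x, θs) - p (x, θs)) ∂(Measure.pi fun _ : Fin B => νΘ) ∂ν𝒳 :=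
          lintegral_prod _ (hqm.sub hpm).aemeasurable
      _ ≤ ∫⁻ x, f θ0 x * R x ∂ν𝒳 := lintegral_mono_ae (hinner.mono fun x hx => hx.2)
      _ = _ := htotal
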